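/- Let (z_i, θ_i), i ∈ I, be a finite family in ℝⁿ × (0, ∞) such that for all i ≠ j: θ_i < ‖z_i - z_j‖ and θ_i + θ_j > ‖z_i - z_j‖ (i.e., z_i ∉ B(z_j, θ_j) and B(z_i,θ_i) ∩ B(z_j,θ_j) ≠ ∅ for all pairs). Then |I| < u·vⁿ for some absolute constants u, v > 0 independent of n and the family. -/

import Mathlib

open Real

theorem stmt_14 :
    ∃ u v : ℝ, 0 < u ∧ 0 < v ∧
      ∀ (n : ℕ) (I : Type) (_ : Fintype I)
        (z : I → EuclideanSpace ℝ (Fin n)) (θ : I → ℝ),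
        (∀ i, 0 < θ i) →
        (∀ i j, i ≠ j → θ i < ‖z i - z j‖ ∧ ‖z i - z j‖ < θ i + θ j) →
        (Fintype.card I : ℝ) < u * v ^ n := by
  refine ⟨2, 5, by norm_num, by norm_num, ?_⟩
  intro n I _ z θ hθ hpair
  classical
  set N := Besicovitch.multiplicity (EuclideanSpace ℝ (Fin n)) with hN
  set τ := Besicovitch.goodτ (EuclideanSpace ℝ (Fin n)) with hτ
  have hτ1 : (1 : ℝ) ≤ τ := (Besicovitch.one_lt_goodτ (EuclideanSpace ℝ (Fin n))).le
  -- main claim : card I ≤ N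
  have hcard : Fintype.card I ≤ N := by
    by_contra hlt
    push_neg at hlt
    -- I is nonempty
    have hIne : Nonempty I := by
      rw [← Fintype.card_pos_iff]
      omega
    -- pick i0 with minimal θ
    obtain ⟨i0, -, hi0⟩ := Finset.exists_min_image Finset.univ θ
      ⟨hIne.some, Finset.mem_univ _⟩
    have hi0min : ∀ i : I, θ i0 ≤ θ i := fun i => hi0 i (Finset.mem_univ i)
    -- embedding of Fin N into the complement of i0
    have hcard2 : Fintype.card (Fin N) ≤ Fintype.card {i : I // i ≠ i0} := by
      have h1 : Fintype.card {i : I // i ≠ i0} = Fintype.card I - 1 := by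
        simp only [ne_eq]
        rw [Fintype.card_subtype_compl, Fintype.card_subtype_eq]
      simp only [Fintype.card_fin]
      omega
    obtain ⟨g⟩ : Nonempty (Fin N ↪ {i : I // i ≠ i0}) :=
      Function.Embedding.nonempty_iff_card_le.2 hcard2
    -- build the map e : Fin (N+1) → I
    let e : Fin (N + 1) → I := fun j =>
      if h : j = Fin.last N then i0 else (g (j.castPred h)).1
    have elast : e (Fin.last N) = i0 := by simp [e]
    have enot : ∀ (j : Fin (N + 1)) (h : j ≠ Fin.last N), e j = (g (j.castPred h)).1 := by
      intro j h; simp [e, h]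
    have einj : ∀ i j : Fin (N + 1), i ≠ j → e i ≠ e j := by
      intro i j hij
      by_cases hi : i = Fin.last N
      · subst hi
        have hj : j ≠ Fin.last N := fun h => hij h.symm
        rw [elast, enot j hj]
        exact fun h => (g (j.castPred hj)).2 h.symm
      · by_cases hj : j = Fin.last N
        · subst hj
          rw [elast, enot i hi]
          exact (g (i.castPred hi)).2
        · rw [enot i hi, enot j hj]
          intro h
          refine hij ?_
          have h2 := g.injective (Subtype.ext h)
          exact Fin.castPred_inj.mp h2
    -- distances
    have hdist : ∀ i j : I, i ≠ j → dist (z i) (z j) = ‖z i - z j‖ := by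
      intro i j _; exact dist_eq_norm _ _
    -- construct the satellite configuration
    have config : Besicovitch.SatelliteConfig (EuclideanSpace ℝ (Fin n)) N τ :=
      { c := fun j => z (e j)
        r := fun j => θ (e j)
        rpos := fun j => hθ _
        h := by
          intro i j hij
          have hne := einj i j hij
          have H1 := hpair (e i) (e j) hne
          have H2 := hpair (e j) (e i) (Ne.symm hne)
          rw [dist_eq_norm, dist_eq_norm]
          by_cases hc : θ (e j) ≤ θ (e i)
          · exact Or.inl ⟨H1.1.le, hc.trans (le_mul_of_one_le_left (hθ _).le hτ1)⟩
          · push_neg at hc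
            exact Or.inr ⟨H2.1.le, hc.le.trans (le_mul_of_one_le_left (hθ _).le hτ1)⟩
        hlast := by
          intro i hi
          have hne : i ≠ Fin.last N := Fin.ne_of_lt hi
          have hne' := einj i (Fin.last N) hne
          have H1 := hpair (e i) (e (Fin.last N)) hne'
          rw [dist_eq_norm]
          refine ⟨H1.1.le, ?_⟩
          rw [elast]
          exact (hi0min (e i)).trans (le_mul_of_one_le_left (hθ _).le hτ1)
        inter := by
          intro i hi
          have hne : i ≠ Fin.last N := Fin.ne_of_lt hi
          have hne' := einj i (Fin.last N) hne
          have H1 := hpair (e i) (e (Fin.last N)) hne'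
          rw [dist_eq_norm]
          exact H1.2.le }
    exact (Besicovitch.isEmpty_satelliteConfig_multiplicity (EuclideanSpace ℝ (Fin n))).false config
  -- conclude
  have h5 : N ≤ 5 ^ n := by
    have := Besicovitch.multiplicity_le (E := EuclideanSpace ℝ (Fin n))
    rwa [show Module.finrank ℝ (EuclideanSpace ℝ (Fin n)) = n from finrank_euclideanSpace_fin] at this
  have : (Fintype.card I : ℝ) ≤ (5 : ℝ) ^ n := by
    calc (Fintype.card I : ℝ) ≤ (N : ℝ) := Nat.cast_le.2 hcard
      _ ≤ ((5 ^ n : ℕ) : ℝ) := Nat.cast_le.2 h5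
      _ = (5 : ℝ) ^ n := by push_cast; ring
  have h5pos : (0 : ℝ) < 5 ^ n := by positivity
  linarith
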